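/- For every element g of G, the number of fixed points of g on {1,...,8} belongs to the set {0, 1, 2, 4, 8}. -/

import Mathlib

open Equiv

/-- Generators of `G` (points `1,…,8` of the paper are `0,…,7` here). -/
def Ggens : Set (Equiv.Perm (Fin 8)) :=
  {c[4, 6] * c[5, 7],
   c[1, 2, 4] * c[3, 6, 5],
   c[0, 1] * c[2, 3] * c[4, 5] * c[6, 7],
   c[0, 4] * c[1, 5] * c[2, 6] * c[3, 7]}

def G : Subgroup (Equiv.Perm (Fin 8)) := Subgroup.closure Ggens

def x3 (a b cc : Fin 8) : Fin 8 := ⟨(a.val ^^^ b.val) ^^^ cc.val, by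
  have := a.isLt; have := b.isLt; have := cc.isLt
  have h1 : a.val ^^^ b.val < 2 ^ 3 := Nat.xor_lt_two_pow a.isLt b.isLt
  exact Nat.xor_lt_two_pow h1 cc.isLt⟩

def IsAff (g : Perm (Fin 8)) : Prop := ∀ x y z : Fin 8, g (x3 x y z) = x3 (g x) (g y) (g z)

instance : DecidablePred IsAff := fun g => by unfold IsAff; infer_instance

lemma isAff_mul {g h : Perm (Fin 8)} (hg : IsAff g) (hh : IsAff h) : IsAff (g * h) := by
  intro x y z
  simp only [Perm.mul_apply, hh x y z, hg (h x) (h y) (h z)]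

lemma isAff_inv {g : Perm (Fin 8)} (hg : IsAff g) : IsAff g⁻¹ := by
  intro x y z
  have := hg (g⁻¹ x) (g⁻¹ y) (g⁻¹ z)
  simp only [Perm.coe_inv, Equiv.apply_symm_apply] at this
  rw [← this]; simp only [Perm.coe_inv, Equiv.symm_apply_apply]

lemma isAff_one : IsAff 1 := fun _ _ _ => rfl

set_option maxRecDepth 100000 in
lemma key (S : Finset (Fin 8)) (h : ∀ x ∈ S, ∀ y ∈ S, ∀ z ∈ S, x3 x y z ∈ S) :
    S.card ∈ ({0, 1, 2, 4, 8} : Finset ℕ) := by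
  revert h; revert S; decide

lemma isAff_of_mem : ∀ g ∈ G, IsAff g := by
  intro g hg
  induction hg using Subgroup.closure_induction with
  | mem x hx =>
    rcases hx with h | h | h | h <;> subst h <;> decide
  | one => exact isAff_one
  | mul _ _ _ _ h1 h2 => exact isAff_mul h1 h2
  | inv _ _ h => exact isAff_inv h

theorem G_fixedPoints :
    ∀ g ∈ G, (Finset.univ.filter fun x : Fin 8 => g x = x).card ∈
      ({0, 1, 2, 4, 8} : Set ℕ) := by
  intro g hg
  have ha := isAff_of_mem g hg
  have h := key (Finset.univ.filter fun x : Fin 8 => g x = x) (by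
    intro x hx y hy z hz
    simp only [Finset.mem_filter, Finset.mem_univ, true_and] at *
    rw [ha x y z, hx, hy, hz])
  simpa using h
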